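/- Let H_k, H_ℓ be separable RKHSs, λ > 0, and samples (x_i, y_i)_{i=1}^N. The unique minimizer over Hilbert–Schmidt operators C : H_ℓ → H_k of the regularized empirical risk (1/N) Σ_{i=1}^N ‖k_{x_i} − C ℓ_{y_i}‖_k² + λ‖C‖_{HS}² is C = Φ_x (L_{yy} + Nλ I_N)^{-1} Ψ_y^⊤, where Φ_x = [k_{x_1} … k_{x_N}], Ψ_y = [ℓ_{y_1} … ℓ_{y_N}] and L_{yy} = [ℓ(y_i, y_j)]_{i,j}. -/

import Mathlib

open scoped RealInnerProductSpace

/-- An abstract presentation of the Hilbert space `HS(K, H)` of Hilbert–Schmidt operators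
from `K` to `H`: a Hilbert space `G` generated by rank-one tensors `t a b = a ⊗ b`
(the operator `g ↦ ⟪b, g⟫ a`), with the Hilbert–Schmidt inner product on rank-one
operators, a dense span, and the (continuous linear) action `ap` of elements of `G`
as operators `K → H`. -/
structure HSOps (H K G : Type*)
    [NormedAddCommGroup H] [InnerProductSpace ℝ H]
    [NormedAddCommGroup K] [InnerProductSpace ℝ K]
    [NormedAddCommGroup G] [InnerProductSpace ℝ G] where
  t : H → K → G
  inner_t : ∀ a b a' b', ⟪t a b, t a' b'⟫ = ⟪a, a'⟫ * ⟪b, b'⟫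
  dense_span :
    (Submodule.span ℝ (Set.range fun p : H × K => t p.1 p.2)).topologicalClosure = ⊤
  ap : G →L[ℝ] K →L[ℝ] H
  ap_t : ∀ a b g, ap (t a b) g = ⟪b, g⟫ • a

open scoped Matrix

lemma HSOps.key {H K G : Type*}
    [NormedAddCommGroup H] [InnerProductSpace ℝ H]
    [NormedAddCommGroup K] [InnerProductSpace ℝ K]
    [NormedAddCommGroup G] [InnerProductSpace ℝ G]
    (T : HSOps H K G) (a : H) (b : K) (D : G) :
    ⟪T.t a b, D⟫ = ⟪a, T.ap D b⟫ := by
  let f : G →L[ℝ] ℝ := innerSL ℝ (T.t a b)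
  let g : G →L[ℝ] ℝ := (innerSL ℝ a).comp (T.ap.flip b)
  have hfg : ∀ x, f x = g x := by
    have hdense : Dense ((Submodule.span ℝ
        (Set.range fun p : H × K => T.t p.1 p.2) : Submodule ℝ G) : Set G) :=
      Submodule.dense_iff_topologicalClosure_eq_top.mpr T.dense_span
    have heq : Set.EqOn f g ((Submodule.span ℝ
        (Set.range fun p : H × K => T.t p.1 p.2) : Submodule ℝ G) : Set G) := by
      intro x hx
      induction hx using Submodule.span_induction with
      | mem x hx =>
          obtain ⟨⟨a', b'⟩, rfl⟩ := hx
          simp [f, g, T.inner_t, T.ap_t, real_inner_smul_right, real_inner_comm b b']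
          ring
      | zero => simp
      | add x y _ _ hx hy => simp [map_add, hx, hy]
      | smul c x _ hx => simp [map_smul, hx]
    exact fun x => congrFun (Continuous.ext_on hdense f.continuous g.continuous heq) x
  simpa [f, g] using hfg D

lemma gram_reg (N : ℕ) (hN : 0 < N) (lam : ℝ) (hlam : 0 < lam)
    {Hl : Type*} [NormedAddCommGroup Hl] [InnerProductSpace ℝ Hl]
    (ψ : Fin N → Hl)
    (L : Matrix (Fin N) (Fin N) ℝ) (hL : ∀ i j, L i j = ⟪ψ i, ψ j⟫) :
    (L + ((N : ℝ) * lam) • (1 : Matrix (Fin N) (Fin N) ℝ))⁻¹ *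
      (L + ((N : ℝ) * lam) • (1 : Matrix (Fin N) (Fin N) ℝ)) = 1 := by
  set M := L + ((N : ℝ) * lam) • (1 : Matrix (Fin N) (Fin N) ℝ) with hM
  have hpos : M.PosDef := by
    rw [Matrix.posDef_iff_dotProduct_mulVec]
    constructor
    · show M.conjTranspose = M
      ext i j
      simp [hM, Matrix.conjTranspose_apply, Matrix.add_apply, Matrix.smul_apply,
        Matrix.one_apply, hL, real_inner_comm (ψ j) (ψ i), eq_comm]
    · intro x hx
      have h1 : (star x) ⬝ᵥ (L *ᵥ x) = ‖∑ i, x i • ψ i‖ ^ 2 := by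
        rw [← real_inner_self_eq_norm_sq, inner_sum]
        simp only [dotProduct, Matrix.mulVec, star_trivial]
        refine Finset.sum_congr rfl fun i _ => ?_
        rw [real_inner_smul_right, sum_inner]
        simp only [real_inner_smul_left, hL, Finset.mul_sum]
        refine Finset.sum_congr rfl fun j _ => ?_
        rw [real_inner_comm (ψ i) (ψ j)]
        ring
      have h2 : (star x) ⬝ᵥ ((((N : ℝ) * lam) • (1 : Matrix (Fin N) (Fin N) ℝ)) *ᵥ x)
          = ((N : ℝ) * lam) * ∑ i, x i ^ 2 := by
        rw [Matrix.smul_mulVec, Matrix.one_mulVec]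
        simp only [dotProduct, star_trivial, Pi.smul_apply, smul_eq_mul,
          Finset.mul_sum]
        exact Finset.sum_congr rfl fun i _ => by ring
      have h3 : 0 < ∑ i, x i ^ 2 := by
        obtain ⟨i, hi⟩ := Function.ne_iff.mp hx
        exact Finset.sum_pos' (fun i _ => sq_nonneg _)
          ⟨i, Finset.mem_univ i, pow_two_pos_of_ne_zero hi⟩
      have hNl : (0:ℝ) < (N : ℝ) * lam := by positivity
      have heq : (star x) ⬝ᵥ (M *ᵥ x)
          = ‖∑ i, x i • ψ i‖ ^ 2 + (N : ℝ) * lam * ∑ i, x i ^ 2 := by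
        rw [hM, Matrix.add_mulVec, dotProduct_add, h1, h2]
      rw [heq]
      exact add_pos_of_nonneg_of_pos (sq_nonneg _) (mul_pos hNl h3)
  exact Matrix.nonsing_inv_mul M (isUnit_iff_ne_zero.mpr (ne_of_gt hpos.det_pos))

/-- The unique minimizer over Hilbert–Schmidt operators `C : H_ℓ → H_k` of the
regularized empirical risk `(1/N) ∑ᵢ ‖k_{xᵢ} − C ℓ_{yᵢ}‖² + λ‖C‖²_HS` is
`Ĉ = Φ_x (L_{yy} + NλI)⁻¹ Ψ_yᵀ`, i.e. the operator `g ↦ ∑_{i,j} [(L+NλI)⁻¹]_{ij} ⟪ℓ_{y_j}, g⟫ k_{xᵢ}`. -/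
theorem stmt7 {Hk Hl G : Type*}
    [NormedAddCommGroup Hk] [InnerProductSpace ℝ Hk] [CompleteSpace Hk]
    [NormedAddCommGroup Hl] [InnerProductSpace ℝ Hl] [CompleteSpace Hl]
    [NormedAddCommGroup G] [InnerProductSpace ℝ G] [CompleteSpace G]
    (T : HSOps Hk Hl G)
    (N : ℕ) (hN : 0 < N) (lam : ℝ) (hlam : 0 < lam)
    (φ : Fin N → Hk) (ψ : Fin N → Hl)
    (L : Matrix (Fin N) (Fin N) ℝ) (hL : ∀ i j, L i j = ⟪ψ i, ψ j⟫)
    (W : Matrix (Fin N) (Fin N) ℝ)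
    (hW : W = (L + ((N : ℝ) * lam) • (1 : Matrix (Fin N) (Fin N) ℝ))⁻¹)
    (risk : G → ℝ)
    (hrisk : ∀ C, risk C = (N : ℝ)⁻¹ * ∑ i, ‖φ i - T.ap C (ψ i)‖ ^ 2 + lam * ‖C‖ ^ 2)
    (Chat : G) (hChat : Chat = ∑ i, ∑ j, W i j • T.t (φ i) (ψ j)) :
    ∀ C : G, risk Chat ≤ risk C ∧ (risk C = risk Chat → C = Chat) := by
  have hNe : (N : ℝ) ≠ 0 := Nat.cast_ne_zero.mpr hN.ne'
  have hWM : W * (L + ((N : ℝ) * lam) • (1 : Matrix (Fin N) (Fin N) ℝ)) = 1 := by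
    rw [hW]; exact gram_reg N hN lam hlam ψ L hL
  have hδ : ∀ p i, (∑ q, W p q * L q i) + (N : ℝ) * lam * W p i
      = if p = i then (1:ℝ) else 0 := by
    intro p i
    have h := congrFun (congrFun hWM p) i
    rw [Matrix.mul_apply] at h
    simp only [Matrix.add_apply, Matrix.smul_apply, Matrix.one_apply, smul_eq_mul,
      mul_add, Finset.sum_add_distrib, mul_ite, mul_one, mul_zero,
      Finset.sum_ite_eq', Finset.mem_univ, if_true] at h
    rw [← h]
    ring
  -- FOC
  have hFOC : ∀ D : G,
      ∑ i, ⟪φ i - T.ap Chat (ψ i), T.ap D (ψ i)⟫ = (N : ℝ) * lam * ⟪Chat, D⟫ := by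
    intro D
    set u : Fin N → Fin N → ℝ := fun p i => ⟪φ p, T.ap D (ψ i)⟫ with hu
    have hCD : ⟪Chat, D⟫ = ∑ p, ∑ q, W p q * u p q := by
      rw [hChat, sum_inner]
      refine Finset.sum_congr rfl fun p _ => ?_
      rw [sum_inner]
      refine Finset.sum_congr rfl fun q _ => ?_
      rw [real_inner_smul_left, T.key]
    have hAC : ∀ i, T.ap Chat (ψ i) = ∑ p, ∑ q, (W p q * L q i) • φ p := by
      intro i
      rw [hChat]
      rw [map_sum]
      simp only [map_sum, map_smul, ContinuousLinearMap.coe_sum', Finset.sum_apply,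
        ContinuousLinearMap.coe_smul', Pi.smul_apply, T.ap_t]
      refine Finset.sum_congr rfl fun p _ => Finset.sum_congr rfl fun q _ => ?_
      rw [hL, smul_smul]
    have hterm : ∀ i, ⟪φ i - T.ap Chat (ψ i), T.ap D (ψ i)⟫
        = u i i - ∑ p, ∑ q, W p q * L q i * u p i := by
      intro i
      rw [inner_sub_left, hAC i, sum_inner]
      congr 1
      refine Finset.sum_congr rfl fun p _ => ?_
      rw [sum_inner]
      refine Finset.sum_congr rfl fun q _ => ?_
      rw [real_inner_smul_left]
    calc ∑ i, ⟪φ i - T.ap Chat (ψ i), T.ap D (ψ i)⟫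
        = ∑ i, (u i i - ∑ p, ∑ q, W p q * L q i * u p i) :=
          Finset.sum_congr rfl fun i _ => hterm i
      _ = ∑ i, ∑ p, ((N : ℝ) * lam * W p i) * u p i := by
          refine Finset.sum_congr rfl fun i _ => ?_
          have hui : ∑ p, ((∑ q, W p q * L q i) + (N : ℝ) * lam * W p i) * u p i
              = u i i := by
            rw [Finset.sum_congr rfl fun p _ => by rw [hδ p i]]
            simp [ite_mul]
          rw [← hui, ← Finset.sum_sub_distrib]
          refine Finset.sum_congr rfl fun p _ => ?_
          rw [add_mul, Finset.sum_mul]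
          ring
      _ = (N : ℝ) * lam * ⟪Chat, D⟫ := by
          rw [hCD, Finset.sum_comm, Finset.mul_sum]
          refine Finset.sum_congr rfl fun p _ => ?_
          rw [Finset.mul_sum]
          exact Finset.sum_congr rfl fun i _ => by ring
  intro C
  set D := C - Chat with hD
  have hC : C = Chat + D := by rw [hD]; abel
  have hCi : ∀ i, φ i - T.ap C (ψ i) = (φ i - T.ap Chat (ψ i)) - T.ap D (ψ i) := by
    intro i
    rw [hC, map_add, ContinuousLinearMap.add_apply]
    abel
  have h1 : ∑ i, ‖φ i - T.ap C (ψ i)‖ ^ 2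
      = ∑ i, ‖φ i - T.ap Chat (ψ i)‖ ^ 2 - 2 * ((N : ℝ) * lam * ⟪Chat, D⟫)
        + ∑ i, ‖T.ap D (ψ i)‖ ^ 2 := by
    have : ∀ i, ‖φ i - T.ap C (ψ i)‖ ^ 2
        = ‖φ i - T.ap Chat (ψ i)‖ ^ 2 - 2 * ⟪φ i - T.ap Chat (ψ i), T.ap D (ψ i)⟫
          + ‖T.ap D (ψ i)‖ ^ 2 := by
      intro i
      rw [hCi i, norm_sub_sq_real]
    rw [Finset.sum_congr rfl fun i _ => this i, Finset.sum_add_distrib,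
      Finset.sum_sub_distrib, ← Finset.mul_sum, hFOC D]
  have h2 : ‖C‖ ^ 2 = ‖Chat‖ ^ 2 + 2 * ⟪Chat, D⟫ + ‖D‖ ^ 2 := by
    rw [hC, norm_add_sq_real]
  have hmain : risk C = risk Chat
      + ((N : ℝ)⁻¹ * ∑ i, ‖T.ap D (ψ i)‖ ^ 2 + lam * ‖D‖ ^ 2) := by
    rw [hrisk C, hrisk Chat, h1, h2]
    field_simp
    ring
  have hE1 : 0 ≤ (N : ℝ)⁻¹ * ∑ i, ‖T.ap D (ψ i)‖ ^ 2 := by positivity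
  have hE2 : 0 ≤ lam * ‖D‖ ^ 2 := by positivity
  constructor
  · rw [hmain]; linarith
  · intro heq
    rw [hmain] at heq
    have h0 : lam * ‖D‖ ^ 2 = 0 := by linarith
    have hD0 : D = 0 := by
      rcases mul_eq_zero.mp h0 with h | h
      · exact absurd h hlam.ne'
      · exact norm_eq_zero.mp (pow_eq_zero_iff two_ne_zero |>.mp h)
    rw [← sub_eq_zero, ← hD, hD0]
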